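/- Let N ≥ 1. In EuclideanSpace ℝ (Fin (N+1)) with standard basis e₁, …, e_{N+1}, define ψ₀ := (1/√2)·e₁ + ∑_{i=2}^{N} (1/√(2^i))·e_i + (1/√(2^N))·e_{N+1}, ψ₁ := −(1/√2)·e₁ + ∑_{i=2}^{N} (1/√(2^i))·e_i + (1/√(2^N))·e_{N+1}, and for 2 ≤ k ≤ N, ψ_k := −(1/√2)·e_k + ∑_{i=k+1}^{N} (1/√(2^{i−k+1}))·e_i + (1/√(2^{N−k+1}))·e_{N+1}. Then the family (ψ₀, ψ₁, …, ψ_N) of N+1 vectors is orthonormal. -/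

import Mathlib

/-- The receiver's decoding measurement vectors in the N-sender coherence-assisted
protocol (coordinates are 0-based: coordinate `j` corresponds to path `e_{j+1}`,
and coordinate `N` is the assistance path `e_{N+1}`).

* `decode N 0 = (1/√2)·e₁ + ∑_{i=2}^{N} (1/√(2^i))·e_i + (1/√(2^N))·e_{N+1}`,
* `decode N 1` is the same with the `e₁`-coordinate negated,
* for `2 ≤ k ≤ N`,
  `decode N k = −(1/√2)·e_k + ∑_{i=k+1}^{N} (1/√(2^{i−k+1}))·e_i + (1/√(2^{N−k+1}))·e_{N+1}`. -/
noncomputable def decode (N : ℕ) (k : Fin (N + 1)) : EuclideanSpace ℝ (Fin (N + 1)) :=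
  (WithLp.equiv 2 (Fin (N + 1) → ℝ)).symm (fun j =>
    if (k : ℕ) ≤ 1 then
      (if (j : ℕ) = 0 then (if (k : ℕ) = 0 then 1 else -1) / Real.sqrt 2
       else if (j : ℕ) < N then 1 / Real.sqrt (2 ^ ((j : ℕ) + 1))
       else 1 / Real.sqrt (2 ^ N))
    else
      (if (j : ℕ) = (k : ℕ) - 1 then -(1 / Real.sqrt 2)
       else if (k : ℕ) - 1 < (j : ℕ) ∧ (j : ℕ) < N then
         1 / Real.sqrt (2 ^ ((j : ℕ) - (k : ℕ) + 2))
       else if (j : ℕ) = N then 1 / Real.sqrt (2 ^ (N - (k : ℕ) + 1))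
       else 0))

namespace DecodeAux

noncomputable def q : ℝ := (Real.sqrt 2)⁻¹

lemma q_mul_q : q * q = 1 / 2 := by
  rw [q, ← mul_inv, Real.mul_self_sqrt (by norm_num : (0:ℝ) ≤ 2)]
  norm_num

lemma one_div_sqrt2 : 1 / Real.sqrt 2 = q := by rw [one_div, q]

lemma inv_sqrt2 : (Real.sqrt 2)⁻¹ = q := rfl

lemma sqrt_two_pow (m : ℕ) : Real.sqrt (2 ^ m) = Real.sqrt 2 ^ m := by
  rw [← Real.sqrt_sq (pow_nonneg (Real.sqrt_nonneg 2) m)]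
  congr 1
  rw [← pow_mul, mul_comm, pow_mul, Real.sq_sqrt (by norm_num : (0:ℝ) ≤ 2)]

lemma inv_sqrt_pow (m : ℕ) : 1 / Real.sqrt (2 ^ m) = q ^ m := by
  rw [sqrt_two_pow, one_div, ← inv_pow, q]

lemma inv_sqrt_pow' (m : ℕ) : (Real.sqrt (2 ^ m))⁻¹ = q ^ m := by
  rw [← one_div, inv_sqrt_pow]

lemma q_pow_mul (a b : ℕ) : q ^ a * q ^ b = q ^ (a + b) := (pow_add q a b).symm

lemma q_pow_even (m : ℕ) : q ^ (2 * m) = (1/2 : ℝ) ^ m := by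
  rw [pow_mul, sq, q_mul_q]

lemma q_sq_pow (a : ℕ) : q ^ a * q ^ a = (1/2 : ℝ) ^ a := by
  rw [← mul_pow, q_mul_q]

lemma prod_form (a b m E : ℕ) (h : a + b = 2 * m + E) :
    q ^ a * q ^ b = (1/2 : ℝ) ^ m * q ^ E := by
  rw [q_pow_mul, h, pow_add, q_pow_even]

lemma geom_half (n : ℕ) : ∑ m ∈ Finset.range n, ((1:ℝ)/2) ^ (m+1) = 1 - (1/2) ^ n := by
  induction n with
  | zero => simp
  | succ n ih => rw [Finset.sum_range_succ, ih, pow_succ]; ring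

lemma geom_half' (n : ℕ) : ∑ m ∈ Finset.range n, ((1:ℝ)/2) ^ (m+2) = 1/2 - (1/2) ^ (n+1) := by
  induction n with
  | zero => simp
  | succ n ih =>
    rw [Finset.sum_range_succ, ih, pow_succ ((1:ℝ)/2) (n+1)]
    ring

/-- The scalar entry function of the decoding vectors. -/
noncomputable def ent (N k j : ℕ) : ℝ :=
  if k ≤ 1 then
    (if j = 0 then (if k = 0 then 1 else -1) / Real.sqrt 2
     else if j < N then 1 / Real.sqrt (2 ^ (j + 1))
     else 1 / Real.sqrt (2 ^ N))
  else
    (if j = k - 1 then -(1 / Real.sqrt 2)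
     else if k - 1 < j ∧ j < N then 1 / Real.sqrt (2 ^ (j - k + 2))
     else if j = N then 1 / Real.sqrt (2 ^ (N - k + 1))
     else 0)

lemma key (N : ℕ) (hN : 1 ≤ N) (k l : ℕ) (hl : l ≤ N) (hkl : k ≤ l) :
    ∑ t ∈ Finset.range (N + 1), ent N k t * ent N l t = if k = l then 1 else 0 := by
  by_cases hl1 : l ≤ 1
  · -- both k, l ∈ {0, 1}
    have hk1 : k ≤ 1 := le_trans hkl hl1
    obtain ⟨M, rfl⟩ : ∃ M, N = M + 1 := ⟨N - 1, by omega⟩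
    have h0 : ∀ m ≤ 1, ent (M+1) m 0 = (if m = 0 then 1 else -1) / Real.sqrt 2 := by
      intro m hm
      simp only [ent, if_pos hm]
      simp
    have hmid : ∀ m ≤ 1, ∀ i < M, ent (M+1) m (i+1) = q ^ (i+2) := by
      intro m hm i hi
      simp only [ent, if_pos hm]
      rw [if_neg (by omega), if_pos (by omega), inv_sqrt_pow]
    have htop : ∀ m ≤ 1, ent (M+1) m (M+1) = q ^ (M+1) := by
      intro m hm
      simp only [ent, if_pos hm]
      rw [if_neg (by omega), if_neg (by omega), inv_sqrt_pow]
    rw [Finset.sum_range_succ, Finset.sum_range_succ']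
    have hA : ∑ i ∈ Finset.range M, ent (M+1) k (i+1) * ent (M+1) l (i+1)
        = 1/2 - (1/2 : ℝ) ^ (M+1) := by
      rw [Finset.sum_congr rfl fun i hi => by
        rw [hmid k hk1 i (Finset.mem_range.1 hi), hmid l hl1 i (Finset.mem_range.1 hi),
          q_sq_pow]]
      exact geom_half' M
    rw [hA, h0 k hk1, h0 l hl1, htop k hk1, htop l hl1, q_sq_pow,
      div_mul_div_comm, Real.mul_self_sqrt (by norm_num : (0:ℝ) ≤ 2)]
    interval_cases k <;> interval_cases l <;> simp_all <;> ring
  · -- 2 ≤ l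
    have h2l : 2 ≤ l := by omega
    have hzero : ∑ t ∈ Finset.Ico 0 (l-1), ent N k t * ent N l t = 0 := by
      apply Finset.sum_eq_zero
      intro t ht
      have htl : t < l - 1 := (Finset.mem_Ico.1 ht).2
      have hz : ent N l t = 0 := by
        simp only [ent]
        rw [if_neg (by omega), if_neg (by omega), if_neg (by omega), if_neg (by omega)]
      rw [hz, mul_zero]
    have hl1' : l - 1 + 1 = l := by omega
    rw [Finset.range_eq_Ico,
      ← Finset.sum_Ico_consecutive (fun t => ent N k t * ent N l t)
        (Nat.zero_le (l-1)) (by omega : l - 1 ≤ N + 1),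
      hzero, zero_add,
      Finset.sum_eq_sum_Ico_succ_bot (by omega : l - 1 < N + 1), hl1',
      Finset.sum_Ico_succ_top (by omega : l ≤ N),
      Finset.sum_Ico_eq_sum_range]
    have el_bot : ent N l (l-1) = -q := by
      simp only [ent]
      rw [if_neg (by omega : ¬ l ≤ 1)]
      simp [inv_sqrt2]
    have el_top : ent N l N = q ^ (N - l + 1) := by
      simp only [ent]
      rw [if_neg (by omega : ¬ l ≤ 1), if_neg (by omega : ¬ N = l - 1),
        if_neg (by omega : ¬ (l - 1 < N ∧ N < N))]
      simp [inv_sqrt_pow']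
    have el_mid : ∀ i < N - l, ent N l (l + i) = q ^ (i+2) := by
      intro i hi
      simp only [ent]
      rw [if_neg (by omega), if_neg (by omega), if_pos (by omega)]
      have he : l + i - l + 2 = i + 2 := by omega
      rw [he, inv_sqrt_pow]
    by_cases hkeq : k = l
    · subst hkeq
      rw [if_pos rfl, el_bot, el_top, q_sq_pow]
      have hB : ∑ i ∈ Finset.range (N - k), ent N k (k + i) * ent N k (k + i)
          = 1/2 - (1/2 : ℝ) ^ (N - k + 1) := by
        rw [Finset.sum_congr rfl fun i hi => by
          rw [el_mid i (Finset.mem_range.1 hi), q_sq_pow]]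
        exact geom_half' (N - k)
      rw [hB, neg_mul_neg, q_mul_q]
      ring
    · -- k < l
      have hklt : k < l := by omega
      rw [if_neg hkeq]
      by_cases hk1 : k ≤ 1
      · -- k ∈ {0,1}, E = l + 1
        have ek_bot : ent N k (l-1) = q ^ l := by
          simp only [ent, if_pos hk1]
          rw [if_neg (by omega), if_pos (by omega)]
          have he : l - 1 + 1 = l := by omega
          rw [he, inv_sqrt_pow]
        have ek_top : ent N k N = q ^ N := by
          simp only [ent, if_pos hk1]
          rw [if_neg (by omega), if_neg (by omega), inv_sqrt_pow]
        have ek_mid : ∀ i < N - l, ent N k (l + i) = q ^ (l + i + 1) := by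
          intro i hi
          simp only [ent, if_pos hk1]
          rw [if_neg (by omega), if_pos (by omega), inv_sqrt_pow]
        have hB : ∑ i ∈ Finset.range (N - l), ent N k (l + i) * ent N l (l + i)
            = (1 - (1/2 : ℝ) ^ (N - l)) * q ^ (l + 1) := by
          rw [Finset.sum_congr rfl fun i hi => by
            rw [ek_mid i (Finset.mem_range.1 hi), el_mid i (Finset.mem_range.1 hi),
              prod_form (l + i + 1) (i + 2) (i + 1) (l + 1) (by omega)]]
          rw [← Finset.sum_mul, geom_half]
        rw [hB, ek_bot, ek_top, el_bot, el_top,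
          prod_form N (N - l + 1) (N - l) (l + 1) (by omega)]
        have : q ^ l * (-q) = -(q ^ (l + 1)) := by rw [mul_neg, ← pow_succ]
        rw [this]
        ring
      · -- 2 ≤ k < l, E = l - k + 2
        have ek_bot : ent N k (l-1) = q ^ (l - k + 1) := by
          simp only [ent]
          rw [if_neg hk1, if_neg (by omega), if_pos (by omega)]
          have he : l - 1 - k + 2 = l - k + 1 := by omega
          rw [he, inv_sqrt_pow]
        have ek_top : ent N k N = q ^ (N - k + 1) := by
          simp only [ent]
          rw [if_neg hk1, if_neg (by omega : ¬ N = k - 1),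
            if_neg (by omega : ¬ (k - 1 < N ∧ N < N))]
          simp [inv_sqrt_pow']
        have ek_mid : ∀ i < N - l, ent N k (l + i) = q ^ (l + i - k + 2) := by
          intro i hi
          simp only [ent]
          rw [if_neg hk1, if_neg (by omega), if_pos (by omega), inv_sqrt_pow]
        have hB : ∑ i ∈ Finset.range (N - l), ent N k (l + i) * ent N l (l + i)
            = (1 - (1/2 : ℝ) ^ (N - l)) * q ^ (l - k + 2) := by
          rw [Finset.sum_congr rfl fun i hi => by
            rw [ek_mid i (Finset.mem_range.1 hi), el_mid i (Finset.mem_range.1 hi),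
              prod_form (l + i - k + 2) (i + 2) (i + 1) (l - k + 2) (by omega)]]
          rw [← Finset.sum_mul, geom_half]
        rw [hB, ek_bot, ek_top, el_bot, el_top,
          prod_form (N - k + 1) (N - l + 1) (N - l) (l - k + 2) (by omega)]
        have : q ^ (l - k + 1) * (-q) = -(q ^ (l - k + 2)) := by rw [mul_neg, ← pow_succ]
        rw [this]
        ring

end DecodeAux

/-- The N+1 decoding vectors of the N-sender coherence-assisted protocol form an
orthonormal family (hence a projective measurement). -/
theorem decode_orthonormal (N : ℕ) (hN : 1 ≤ N) : Orthonormal ℝ (decode N) := by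
  rw [orthonormal_iff_ite]
  have hsum : ∀ a b : Fin (N + 1),
      (inner ℝ (decode N a) (decode N b) : ℝ) =
        ∑ t ∈ Finset.range (N + 1), DecodeAux.ent N a t * DecodeAux.ent N b t := by
    intro a b
    rw [← Fin.sum_univ_eq_sum_range (fun t => DecodeAux.ent N a t * DecodeAux.ent N b t) (N + 1)]
    simp only [PiLp.inner_apply, RCLike.inner_apply, conj_trivial]
    exact Finset.sum_congr rfl fun x _ => mul_comm _ _
  intro i j
  rcases le_total (i : ℕ) (j : ℕ) with h | h
  · rw [hsum, DecodeAux.key N hN i j (Fin.is_le j) h]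
    by_cases hij : i = j
    · simp [hij]
    · rw [if_neg (fun hh => hij (Fin.ext hh)), if_neg hij]
  · rw [real_inner_comm, hsum, DecodeAux.key N hN j i (Fin.is_le i) h]
    by_cases hij : i = j
    · simp [hij]
    · rw [if_neg (fun hh => hij (Fin.ext hh.symm)), if_neg hij]
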